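/- Every interval graph admits a maximum neighborhood ordering: there is an ordering v₁ < v₂ < ... < vₙ of the vertices (by nondecreasing right endpoints of a representing family of intervals) such that for every i, the neighbor vⱼ of vᵢ with the largest index at least i satisfies: for every neighbor v_k of v_i with k ≥ i and every neighbor v_ℓ of v_k with ℓ ≥ i, v_ℓ is adjacent or equal to v_j. In other words, in the induced subgraph Gᵢ on {vᵢ,...,vₙ}, every vertex vⱼ maximizing the index among N_{Gᵢ}[vᵢ] is a maximum neighbor of vᵢ, i.e., N_{Gᵢ}[w] ⊆ N_{Gᵢ}[vⱼ] for all w ∈ N_{Gᵢ}[vᵢ]. -/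

import Mathlib

/-- The interval graph of the family of closed intervals `[l i, r i]`. -/
def intervalGraph {n : ℕ} (l r : Fin n → ℝ) : SimpleGraph (Fin n) where
  Adj i j := i ≠ j ∧ l j ≤ r i ∧ l i ≤ r j
  symm := by constructor; intro i j h; exact ⟨h.1.symm, h.2.2, h.2.1⟩
  loopless := by constructor; intro i h; exact h.1 rfl

/-- Interval graphs are dually chordal: ordering the intervals by nondecreasing right
endpoints, for every `i` the largest-index member `j` of the closed neighborhood of `i`
within `{i, ..., n}` is a maximum neighbor of `i` in the induced subgraph `Gᵢ`:
`N_{Gᵢ}[w] ⊆ N_{Gᵢ}[vⱼ]` for every `w ∈ N_{Gᵢ}[vᵢ]`. -/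
theorem intervalGraph_max_nbhd_ordering {n : ℕ} (l r : Fin n → ℝ)
    (hlr : ∀ i, l i ≤ r i) (hmono : ∀ i j : Fin n, i ≤ j → r i ≤ r j) :
    ∀ i j : Fin n, i ≤ j → (j = i ∨ (intervalGraph l r).Adj i j) →
      (∀ j' : Fin n, i ≤ j' → (j' = i ∨ (intervalGraph l r).Adj i j') → j' ≤ j) →
      ∀ w : Fin n, i ≤ w → (w = i ∨ (intervalGraph l r).Adj i w) →
        ∀ m : Fin n, i ≤ m → (m = w ∨ (intervalGraph l r).Adj w m) →
          (m = j ∨ (intervalGraph l r).Adj j m) := by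
  intro i j hij hj hmax w hiw hw m him hm
  by_cases hmj : m = j
  · exact Or.inl hmj
  right
  -- l j ≤ r i
  have hlj : l j ≤ r i := by
    rcases hj with h | h
    · rw [h]; exact hlr i
    · exact h.2.1
  -- l w ≤ r i
  have hlw : l w ≤ r i := by
    rcases hw with h | h
    · rw [h]; exact hlr i
    · exact h.2.1
  have hwj : w ≤ j := hmax w hiw hw
  -- l m ≤ r j
  have h1 : l m ≤ r j := by
    rcases hm with h | h
    · subst h; exact hlw.trans (hmono i j hij)
    · exact h.2.1.trans (hmono w j hwj)
  -- l j ≤ r m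
  have h2 : l j ≤ r m := hlj.trans (hmono i m him)
  exact ⟨fun h => hmj h.symm, h1, h2⟩
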